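/- arXiv:1307.2077 — 6 statements merged into one kernel-verified Lean document; each statement's English description precedes it below -/
import Mathlib

section
/- Let V ⊆ ℂ^{n+2} be the complexification of a B-nondegenerate real subspace, α ∈ ℂ× with |α| ≠ 1, and L a null line with L and ρ_V L complementary. Set V′ := p^V_{α,L}(0)V and L′ := p^V_{α,L}(α*)L̄, assume L′ and ρ_{V′}L′ are complementary, and define r(λ) := p^{V′}_{α*,L′}(λ) ∘ p^V_{α,L}(λ) for λ ∈ (ℂ∪{∞}) ∖ {±α, ±α*}. Then: (i) the automorphism r(−λ) ∘ ρ_V ∘ r(λ)^{-1} is the same for all λ in the domain; (ii) r(0)^{-1} ∘ r(∞) maps V to itself and det((r(0)^{-1} ∘ r(∞))|_V) = 1. -/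
noncomputable section

open Module

/-- The complexification `ℂ^{n+2}` of `ℝ^{n+1,1}`. -/
abbrev Cn (n : ℕ) := Fin (n + 2) → ℂ

/-- The complex-bilinear extension `B` of the signature `(n+1,1)` inner product on
`ℝ^{n+1,1}`. -/
def Bf (n : ℕ) (v w : Cn n) : ℂ :=
  ∑ i : Fin (n + 2), (if (i : ℕ) < n + 1 then 1 else -1) * v i * w i

lemma Bf_add_left {n : ℕ} (v v' w : Cn n) :
    Bf n (v + v') w = Bf n v w + Bf n v' w := by
  simp only [Bf, Pi.add_apply, ← Finset.sum_add_distrib]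
  exact Finset.sum_congr rfl fun i _ => by ring

lemma Bf_smul_left {n : ℕ} (c : ℂ) (v w : Cn n) :
    Bf n (c • v) w = c * Bf n v w := by
  simp only [Bf, Pi.smul_apply, smul_eq_mul, Finset.mul_sum]
  exact Finset.sum_congr rfl fun i _ => by ring

lemma Bf_zero_left {n : ℕ} (w : Cn n) : Bf n 0 w = 0 := by
  simp [Bf]

/-- Complex conjugation on `ℂ^{n+2}`, as a `conj`-semilinear automorphism;
its fixed point set is `ℝ^{n+1,1}`. -/
def conjSL (n : ℕ) : Cn n →ₛₗ[starRingEnd ℂ] Cn n where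
  toFun v := fun i => starRingEnd ℂ (v i)
  map_add' a b := by funext i; simp
  map_smul' c v := by funext i; simp

instance : RingHomSurjective (starRingEnd ℂ) :=
  ⟨fun x => ⟨starRingEnd ℂ x, by simp⟩⟩

/-- The conjugate `Ū` of a complex subspace `U` of `ℂ^{n+2}`. -/
def conjSub {n : ℕ} (U : Submodule ℂ (Cn n)) : Submodule ℂ (Cn n) :=
  U.map (conjSL n)

/-- The real points `ℝ^{n+1,1}` inside `ℂ^{n+2}`, as a real subspace. -/
def realSub (n : ℕ) : Submodule ℝ (Cn n) where
  carrier := {v | ∀ i, starRingEnd ℂ (v i) = v i}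
  add_mem' := by
    intro a b ha hb i
    simp only [Pi.add_apply, map_add, ha i, hb i]
  zero_mem' := by intro i; simp
  smul_mem' := by
    intro c v hv i
    simp only [Pi.smul_apply, Complex.real_smul, map_mul, Complex.conj_ofReal, hv i]

/-- The real points `W ∩ ℝ^{n+1,1}` of a complex subspace `W ⊆ ℂ^{n+2}`. -/
def realPoints {n : ℕ} (W : Submodule ℂ (Cn n)) : Submodule ℝ (Cn n) :=
  (W.restrictScalars ℝ) ⊓ realSub n

/-- The Gram matrix `diag(1,1,1,-1)`. -/
def gram31 (i j : Fin 4) : ℂ :=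
  if i = j then (if (i : ℕ) < 3 then 1 else -1) else 0

/-- A real subspace `P` of `ℂ^{n+2}` has signature `(3,1)` if it admits a
basis whose Gram matrix with respect to `B` is `diag(1,1,1,-1)`. -/
def hasSig31 (n : ℕ) (P : Submodule ℝ (Cn n)) : Prop :=
  ∃ b : Fin 4 → Cn n, (∀ i, b i ∈ P) ∧
    Submodule.span ℝ (Set.range b) = P ∧
    ∀ i j, Bf n (b i) (b j) = gram31 i j

/-- The orthogonal complement of a subspace with respect to `B`. -/
def perp (n : ℕ) (V : Submodule ℂ (Cn n)) : Submodule ℂ (Cn n) where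
  carrier := {v | ∀ w ∈ V, Bf n v w = 0}
  add_mem' := by
    intro a b ha hb w hw
    rw [Bf_add_left, ha w hw, hb w hw, add_zero]
  zero_mem' := by
    intro w hw
    exact Bf_zero_left w
  smul_mem' := by
    intro c v hv w hw
    rw [Bf_smul_left, hv w hw, mul_zero]

/-- `ρ` is the reflection across `V`: the identity on `V` and minus the identity
on `V^⊥`. -/
def IsReflection (n : ℕ) (V : Submodule ℂ (Cn n)) (ρ : Cn n →ₗ[ℂ] Cn n) : Prop :=
  (∀ v ∈ V, ρ v = v) ∧ (∀ v ∈ perp n V, ρ v = -v)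

/-- The automorphism `Γ^{ℓ⁺}_{ℓ⁻}(λ)`, where `ℓ⁺, ℓ⁻` are the complementary null
lines spanned by `u` and `w`: it is multiplication by `λ` on `ℓ⁺`, by `λ⁻¹` on
`ℓ⁻` and the identity on `(ℓ⁺ ⊕ ℓ⁻)^⊥`. -/
def GammaL (n : ℕ) (u w : Cn n) (lam : ℂ) : Cn n →ₗ[ℂ] Cn n where
  toFun v := v + ((lam - 1) * (Bf n v w / Bf n u w)) • u
      + ((lam⁻¹ - 1) * (Bf n v u / Bf n u w)) • w
  map_add' a b := by
    simp only [Bf_add_left]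
    module
  map_smul' c v := by
    simp only [Bf_smul_left, RingHom.id_apply]
    module

/-- `λ ↦ λ* = 1/λ̄`. -/
def cstar (z : ℂ) : ℂ := (starRingEnd ℂ z)⁻¹

/-- The linear fractional transformation appearing in the simple factor
`p^V_{α,L}`. -/
def psi (α lam : ℂ) : ℂ := (1 + α) * (lam - α) / ((1 - α) * (lam + α))

/-- The simple factor `p^V_{α,L}(λ) = Γ^L_{ρ_V L}((1+α)(λ-α)/((1-α)(λ+α)))`,
where `ρ` is the reflection across `V` and `ℓ` spans the null line `L`. -/
def pSF (n : ℕ) (ρ : Cn n →ₗ[ℂ] Cn n) (ℓ : Cn n) (α lam : ℂ) : Cn n →ₗ[ℂ] Cn n :=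
  GammaL n ℓ (ρ ℓ) (psi α lam)

/-- The value `p^V_{α,L}(∞) = Γ^L_{ρ_V L}((1+α)/(1-α))`. -/
def pSFinf (n : ℕ) (ρ : Cn n →ₗ[ℂ] Cn n) (ℓ : Cn n) (α : ℂ) : Cn n →ₗ[ℂ] Cn n :=
  GammaL n ℓ (ρ ℓ) ((1 + α) / (1 - α))


/-! ### Auxiliary lemmas -/

set_option linter.unusedSectionVars false
set_option maxHeartbeats 1000000

lemma Bf_symm {n : ℕ} (v w : Cn n) : Bf n v w = Bf n w v :=
  Finset.sum_congr rfl fun i _ => by ring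

lemma Bf_add_right {n : ℕ} (v w w' : Cn n) :
    Bf n v (w + w') = Bf n v w + Bf n v w' := by
  rw [Bf_symm, Bf_add_left, Bf_symm w v, Bf_symm w' v]

lemma Bf_smul_right {n : ℕ} (c : ℂ) (v w : Cn n) :
    Bf n v (c • w) = c * Bf n v w := by
  rw [Bf_symm, Bf_smul_left, Bf_symm]

lemma mem_perp {n : ℕ} {V : Submodule ℂ (Cn n)} {v : Cn n} :
    v ∈ perp n V ↔ ∀ w ∈ V, Bf n v w = 0 := Iff.rfl

/-- `Bf` as a bilinear form. -/
def Bform (n : ℕ) : LinearMap.BilinForm ℂ (Cn n) :=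
  LinearMap.mk₂ ℂ (Bf n) Bf_add_left Bf_smul_left Bf_add_right Bf_smul_right

lemma Bform_apply {n : ℕ} (v w : Cn n) : Bform n v w = Bf n v w := rfl

lemma perp_eq_orthogonal {n : ℕ} (V : Submodule ℂ (Cn n)) :
    perp n V = (Bform n).orthogonal V := by
  ext m
  simp only [mem_perp, LinearMap.BilinForm.mem_orthogonal_iff, LinearMap.BilinForm.IsOrtho,
    Bform_apply]
  constructor
  · intro h w hw; rw [Bf_symm]; exact h w hw
  · intro h w hw; rw [Bf_symm]; exact h w hw

/-- Key spanning lemma: if `B|V` is nondegenerate then `Cn n = V + V^⊥`. -/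
lemma span_decomp {n : ℕ} (V : Submodule ℂ (Cn n))
    (hVnd : ∀ v ∈ V, (∀ w ∈ V, Bf n v w = 0) → v = 0) (x : Cn n) :
    ∃ v ∈ V, ∃ w ∈ perp n V, x = v + w := by
  have hrefl : (Bform n).IsRefl := by
    intro a b h; rw [Bform_apply, Bf_symm] at h; exact h
  have hnd : ((Bform n).restrict V).Nondegenerate := by
    refine ⟨?_, ?_⟩
    · intro ⟨v, hv⟩ h
      have : v = 0 := hVnd v hv (fun w hw => h ⟨w, hw⟩)
      exact Subtype.ext this
    · intro ⟨v, hv⟩ h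
      exact Subtype.ext (hVnd v hv (fun w hw => (Bf_symm v w).trans (h ⟨w, hw⟩)))
  have hcompl := LinearMap.BilinForm.isCompl_orthogonal_of_restrict_nondegenerate
    (B := Bform n) (W := V) hrefl hnd
  have htop : V ⊔ (Bform n).orthogonal V = ⊤ := hcompl.codisjoint.eq_top
  have hx : x ∈ V ⊔ (Bform n).orthogonal V := htop ▸ Submodule.mem_top
  rcases Submodule.mem_sup.1 hx with ⟨v, hv, w, hw, hvw⟩
  exact ⟨v, hv, w, (perp_eq_orthogonal V).symm ▸ hw, hvw.symm⟩

section pack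
variable {n : ℕ} {V : Submodule ℂ (Cn n)} {ρ : Cn n →ₗ[ℂ] Cn n}
  (hρ : IsReflection n V ρ)
  (hsp : ∀ x : Cn n, ∃ v ∈ V, ∃ w ∈ perp n V, x = v + w)

include hρ hsp

lemma refl_sq (x : Cn n) : ρ (ρ x) = x := by
  obtain ⟨v, hv, w, hw, rfl⟩ := hsp x
  rw [map_add, hρ.1 v hv, hρ.2 w hw, map_add, hρ.1 v hv, map_neg, hρ.2 w hw, neg_neg]

lemma refl_orth (x y : Cn n) : Bf n (ρ x) (ρ y) = Bf n x y := by
  obtain ⟨v, hv, w, hw, rfl⟩ := hsp x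
  obtain ⟨v', hv', w', hw', rfl⟩ := hsp y
  have hwv' : Bf n w v' = 0 := mem_perp.1 hw v' hv'
  have hw'v : Bf n w' v = 0 := mem_perp.1 hw' v hv
  have hvw' : Bf n v w' = 0 := by rw [Bf_symm]; exact hw'v
  have hv'w : Bf n v' w = 0 := by rw [Bf_symm]; exact hwv'
  rw [map_add, map_add, hρ.1 v hv, hρ.2 w hw, hρ.1 v' hv', hρ.2 w' hw']
  simp only [Bf_add_left, Bf_add_right]
  have h1 : Bf n v (-w') = 0 := by
    rw [show -w' = (-1 : ℂ) • w' by module, Bf_smul_right, hvw']; ring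
  have h2 : Bf n (-w) v' = 0 := by
    rw [show -w = (-1 : ℂ) • w by module, Bf_smul_left, hwv']; ring
  have h3 : Bf n (-w) (-w') = Bf n w w' := by
    rw [show -w = (-1 : ℂ) • w by module, show -w' = (-1 : ℂ) • w' by module,
      Bf_smul_left, Bf_smul_right]; ring
  rw [h1, h2, h3, hvw', hwv']

lemma refl_fixed (x : Cn n) (hx : ρ x = x) : x ∈ V := by
  obtain ⟨v, hv, w, hw, rfl⟩ := hsp x
  rw [map_add, hρ.1 v hv, hρ.2 w hw] at hx
  have : w = 0 := by
    have h2 : (2 : ℂ) • w = 0 := by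
      have := congrArg (fun z => z - v + w) hx
      simpa [two_smul] using this.symm
    simpa using smul_eq_zero.1 h2 |>.resolve_left (by norm_num)
  rw [this, add_zero]; exact hv

lemma refl_unique (σ : Cn n →ₗ[ℂ] Cn n) (hσ : IsReflection n V σ) : σ = ρ := by
  refine LinearMap.ext fun x => ?_
  obtain ⟨v, hv, w, hw, rfl⟩ := hsp x
  simp only [LinearMap.add_apply, map_add]
  rw [hσ.1 v hv, hσ.2 w hw, hρ.1 v hv, hρ.2 w hw]

end pack

lemma GammaL_apply {n : ℕ} (u w : Cn n) (lam : ℂ) (v : Cn n) :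
    GammaL n u w lam v = v + ((lam - 1) * (Bf n v w / Bf n u w)) • u
      + ((lam⁻¹ - 1) * (Bf n v u / Bf n u w)) • w := rfl

section gamma
variable {n : ℕ} {u w : Cn n}
  (hu : Bf n u u = 0) (hw : Bf n w w = 0) (hβ : Bf n u w ≠ 0)

include hu hw hβ

lemma Bf_GammaL_w (lam : ℂ) (v : Cn n) :
    Bf n (GammaL n u w lam v) w = lam * Bf n v w := by
  rw [GammaL_apply]
  simp only [Bf_add_left, Bf_smul_left, hw]
  field_simp
  ring

lemma Bf_GammaL_u (lam : ℂ) (v : Cn n) :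
    Bf n (GammaL n u w lam v) u = lam⁻¹ * Bf n v u := by
  rw [GammaL_apply]
  simp only [Bf_add_left, Bf_smul_left, hu, Bf_symm w u]
  field_simp
  ring

lemma GammaL_comp (a b : ℂ) :
    (GammaL n u w a).comp (GammaL n u w b) = GammaL n u w (a * b) := by
  refine LinearMap.ext fun v => ?_
  rw [LinearMap.comp_apply]
  conv_lhs => rw [GammaL_apply u w a]
  rw [Bf_GammaL_w hu hw hβ, Bf_GammaL_u hu hw hβ, GammaL_apply u w b, GammaL_apply u w (a*b),
    mul_inv]
  module

lemma GammaL_one : GammaL n u w 1 = LinearMap.id := by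
  refine LinearMap.ext fun v => ?_
  rw [GammaL_apply]
  simp

lemma GammaL_orth {mu : ℂ} (hmu : mu ≠ 0) (x y : Cn n) :
    Bf n (GammaL n u w mu x) (GammaL n u w mu y) = Bf n x y := by
  rw [GammaL_apply, GammaL_apply]
  simp only [Bf_add_left, Bf_add_right, Bf_smul_left, Bf_smul_right, hu, hw,
    Bf_symm u y, Bf_symm w y, Bf_symm w u]
  field_simp
  ring

end gamma

lemma GammaL_comp_rho {n : ℕ} {u : Cn n} {ρ : Cn n →ₗ[ℂ] Cn n}
    (hsq : ∀ x, ρ (ρ x) = x) (horth : ∀ x y, Bf n (ρ x) (ρ y) = Bf n x y) (mu : ℂ) :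
    (GammaL n u (ρ u) mu).comp ρ = ρ.comp (GammaL n u (ρ u) mu⁻¹) := by
  refine LinearMap.ext fun x => ?_
  have h1 : Bf n (ρ x) (ρ u) = Bf n x u := horth x u
  have h2 : Bf n (ρ x) u = Bf n x (ρ u) := by
    conv_lhs => rw [← hsq u]
    exact horth x (ρ u)
  rw [LinearMap.comp_apply, LinearMap.comp_apply, GammaL_apply, GammaL_apply,
    map_add, map_add, map_smul, map_smul, hsq u, h1, h2, inv_inv]
  module

lemma rho_comp_GammaL {n : ℕ} {u : Cn n} {ρ : Cn n →ₗ[ℂ] Cn n}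
    (hsq : ∀ x, ρ (ρ x) = x) (horth : ∀ x y, Bf n (ρ x) (ρ y) = Bf n x y) (mu : ℂ) :
    ρ.comp (GammaL n u (ρ u) mu) = (GammaL n u (ρ u) mu⁻¹).comp ρ := by
  have := GammaL_comp_rho hsq horth (u := u) mu⁻¹
  rw [inv_inv] at this
  exact this.symm

lemma Bf_conj {n : ℕ} (v w : Cn n) :
    Bf n (conjSL n v) (conjSL n w) = starRingEnd ℂ (Bf n v w) := by
  simp only [Bf, conjSL, LinearMap.coe_mk, AddHom.coe_mk, map_sum, map_mul]
  refine Finset.sum_congr rfl fun i _ => ?_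
  by_cases hi : (i : ℕ) < n + 1 <;> simp [hi]

section scal
variable {α : ℂ} (hα : α ≠ 0) (habs : ‖α‖ ≠ 1)
include hα habs

lemma a_ne_one : α ≠ 1 := fun h => habs (by simp [h])
lemma a_ne_negone : α ≠ -1 := fun h => habs (by simp [h])
lemma one_add_a : 1 + α ≠ 0 := by
  intro h; exact a_ne_negone hα habs (by linear_combination h)
lemma one_sub_a : 1 - α ≠ 0 := by
  intro h; exact a_ne_one hα habs (by linear_combination -h)
lemma conj_a_ne : starRingEnd ℂ α ≠ 0 := by simpa using hα
lemma cstar_ne_zero : cstar α ≠ 0 := inv_ne_zero (conj_a_ne hα habs)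
lemma cstar_abs : ‖cstar α‖ ≠ 1 := by
  rw [cstar, norm_inv, Complex.norm_conj]
  intro h
  exact habs (by rw [← inv_inv ‖α‖, h]; norm_num)
lemma cstar_add_a : cstar α + α ≠ 0 := by
  intro h
  have h2 : (starRingEnd ℂ α) * (cstar α + α) = 0 := by rw [h, mul_zero]
  rw [mul_add, cstar, mul_inv_cancel₀ (conj_a_ne hα habs), mul_comm, Complex.mul_conj] at h2
  have : (Complex.normSq α : ℝ) = -1 := by
    have := congrArg Complex.re h2
    simp at this
    linarith
  nlinarith [Complex.normSq_nonneg α]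
lemma cstar_sub_a : cstar α - α ≠ 0 := by
  intro h
  have h2 : (starRingEnd ℂ α) * (cstar α - α) = 0 := by rw [h, mul_zero]
  rw [mul_sub, cstar, mul_inv_cancel₀ (conj_a_ne hα habs), mul_comm, Complex.mul_conj] at h2
  have hn : Complex.normSq α = 1 := by
    have := congrArg Complex.re h2
    simp at this
    linarith
  have : ‖α‖ = 1 := by
    rw [← Complex.sq_norm] at hn
    nlinarith [norm_nonneg α]
  exact habs this
end scal

lemma psi_ne_zero {a lam : ℂ} (h1 : 1 + a ≠ 0) (h2 : 1 - a ≠ 0)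
    (h3 : lam - a ≠ 0) (h4 : lam + a ≠ 0) : psi a lam ≠ 0 :=
  div_ne_zero (mul_ne_zero h1 h3) (mul_ne_zero h2 h4)

lemma psi_zero_eq {a : ℂ} (ha : a ≠ 0) (h2 : 1 - a ≠ 0) :
    psi a 0 = -((1 + a) / (1 - a)) := by
  rw [psi]
  field_simp
  ring_nf
  field_simp

lemma psi_zero_ne {a : ℂ} (ha : a ≠ 0) (h1 : 1 + a ≠ 0) (h2 : 1 - a ≠ 0) :
    psi a 0 ≠ 0 := by
  rw [psi_zero_eq ha h2]
  exact neg_ne_zero.2 (div_ne_zero h1 h2)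

lemma psi_mul_neg {a lam : ℂ} (ha : a ≠ 0) (h1 : 1 + a ≠ 0) (h2 : 1 - a ≠ 0)
    (h3 : lam ≠ a) (h4 : lam ≠ -a) :
    (psi a 0) ^ 2 * (psi a lam)⁻¹ = psi a (-lam) := by
  have h3' : lam - a ≠ 0 := sub_ne_zero.2 h3
  have h4' : lam + a ≠ 0 := fun h => h4 (by linear_combination h)
  have h5 : -lam + a ≠ 0 := fun h => h3 (by linear_combination -h)
  have h6 : -lam - a ≠ 0 := fun h => h4 (by linear_combination -h)
  rw [psi, psi, psi]
  field_simp
  ring_nf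
  field_simp
  ring

lemma det_id_add_smulRight {M : Type*} [AddCommGroup M] [Module ℂ M] [FiniteDimensional ℂ M]
    (f : M →ₗ[ℂ] ℂ) (u : M) :
    LinearMap.det (LinearMap.id + f.smulRight u) = 1 + f u := by
  classical
  let b := Module.finBasis ℂ M
  rw [← LinearMap.det_toMatrix b]
  have hmat : LinearMap.toMatrix b b (LinearMap.id + f.smulRight u)
      = 1 + Matrix.replicateCol Unit (fun i => b.repr u i) * Matrix.replicateRow Unit (fun j => f (b j)) := by
    ext i j
    simp only [LinearMap.toMatrix_apply, LinearMap.add_apply, LinearMap.id_apply,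
      LinearMap.smulRight_apply, map_add, map_smul, Finsupp.add_apply, Finsupp.smul_apply,
      Basis.repr_self, Matrix.add_apply, Matrix.mul_apply, Matrix.replicateCol_apply, Matrix.replicateRow_apply,
      Finset.univ_unique, Finset.sum_singleton, Matrix.one_apply, Finsupp.single_apply,
      smul_eq_mul]
    by_cases h : i = j
    · simp [h]; ring
    · rw [if_neg (fun hji : j = i => h hji.symm), if_neg (fun hij : i = j => h hij)]; ring
  rw [hmat, Matrix.det_one_add_replicateCol_mul_replicateRow]
  congr 1
  rw [dotProduct]
  have := congrArg f (b.sum_repr u)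
  rw [map_sum] at this
  rw [← this]
  exact Finset.sum_congr rfl fun i _ => by rw [map_smul]; simp [mul_comm]

/-! The reflection factor `Γ_{L, ρL}(-1)` restricted to `V`, and its determinant. -/
section reflfactor
variable {n : ℕ} {V : Submodule ℂ (Cn n)} {ρ : Cn n →ₗ[ℂ] Cn n} {u : Cn n}
  (hρ : IsReflection n V ρ)
  (hsp : ∀ x : Cn n, ∃ v ∈ V, ∃ w ∈ perp n V, x = v + w)
  (hu : Bf n u u = 0) (hβ : Bf n u (ρ u) ≠ 0)

include hρ hsp hu hβ

lemma refl_factor_a_mem : u + ρ u ∈ V := by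
  refine refl_fixed hρ hsp _ ?_
  rw [map_add, refl_sq hρ hsp u, add_comm]

lemma refl_factor_apply (v : Cn n) (hv : v ∈ V) :
    GammaL n u (ρ u) (-1) v = v + (-(Bf n v (u + ρ u) / Bf n u (ρ u))) • (u + ρ u) := by
  have h1 : Bf n v (ρ u) = Bf n v u := by
    have h2 := refl_orth hρ hsp v u
    rw [hρ.1 v hv] at h2
    rw [← h2]
  rw [GammaL_apply, Bf_add_right, h1]
  have : (-1 : ℂ)⁻¹ = -1 := by norm_num
  rw [this]
  module

lemma refl_factor_mem (v : Cn n) (hv : v ∈ V) : GammaL n u (ρ u) (-1) v ∈ V := by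
  rw [refl_factor_apply hρ hsp hu hβ v hv]
  exact V.add_mem hv (V.smul_mem _ (refl_factor_a_mem hρ hsp hu hβ))

lemma refl_factor_det
    (hmem : ∀ v ∈ V, GammaL n u (ρ u) (-1) v ∈ V) :
    LinearMap.det ((GammaL n u (ρ u) (-1)).restrict hmem) = -1 := by
  have hwnull : Bf n (ρ u) (ρ u) = 0 := by rw [refl_orth hρ hsp u u]; exact hu
  set a2 : Cn n := u + ρ u with ha2
  have ha2V : a2 ∈ V := refl_factor_a_mem hρ hsp hu hβ
  have hBa2 : Bf n a2 a2 = 2 * Bf n u (ρ u) := by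
    rw [ha2, Bf_add_left, Bf_add_right, Bf_add_right, hu, hwnull, Bf_symm (ρ u) u]
    ring
  -- the linear functional  v ↦ -(Bf v a2 / β)
  set β := Bf n u (ρ u) with hβdef
  let f : ↥V →ₗ[ℂ] ℂ :=
    { toFun := fun v => -(Bf n (v : Cn n) a2 / β)
      map_add' := by
        intro x y
        simp only [Submodule.coe_add, Bf_add_left]
        ring
      map_smul' := by
        intro c x
        simp only [Submodule.coe_smul, Bf_smul_left, RingHom.id_apply, smul_eq_mul]
        ring }
  have hrestrict : (GammaL n u (ρ u) (-1)).restrict hmem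
      = LinearMap.id + f.smulRight ⟨a2, ha2V⟩ := by
    refine LinearMap.ext fun ⟨v, hv⟩ => ?_
    refine Subtype.ext ?_
    simp only [LinearMap.restrict_apply, LinearMap.add_apply, LinearMap.id_apply,
      LinearMap.smulRight_apply, Submodule.coe_add, Submodule.coe_smul, SetLike.mk_smul_mk]
    exact refl_factor_apply hρ hsp hu hβ v hv
  rw [hrestrict, det_id_add_smulRight]
  show 1 + -(Bf n a2 a2 / β) = -1
  rw [hBa2]
  field_simp
  norm_num

end reflfactor

/-- In the setting of the two-step simple factor
`r(λ) := p^{V'}_{α*,L'}(λ) ∘ p^V_{α,L}(λ)`: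
(i) `r(-λ) ∘ ρ_V ∘ r(λ)⁻¹` is the same for all `λ` in the domain (stated as the
existence of a single `K` with `r(-λ) ∘ ρ_V = K ∘ r(λ)` for all admissible `λ`);
(ii) `r(0)⁻¹ ∘ r(∞)` maps `V` to itself and `det ((r(0)⁻¹ ∘ r(∞))|_V) = 1`.
Here `r(0)⁻¹ = p^V_{α,L}(0)⁻¹ ∘ p^{V'}_{α*,L'}(0)⁻¹` and `p(μ)⁻¹` is realised as
`Γ` evaluated at the inverse parameter. -/
theorem statement8 (n : ℕ) (V : Submodule ℂ (Cn n))
    (hVconj : conjSub V = V)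
    (hVnd : ∀ v ∈ V, (∀ w ∈ V, Bf n v w = 0) → v = 0)
    (ρ : Cn n →ₗ[ℂ] Cn n) (hρ : IsReflection n V ρ)
    (α : ℂ) (hα : α ≠ 0) (hαabs : ‖α‖ ≠ 1)
    (ℓ : Cn n) (hℓ : ℓ ≠ 0) (hℓnull : Bf n ℓ ℓ = 0)
    (hℓcompl : Bf n ℓ (ρ ℓ) ≠ 0)
    (V' : Submodule ℂ (Cn n)) (hV' : V' = Submodule.map (pSF n ρ ℓ α 0) V)
    (ρ' : Cn n →ₗ[ℂ] Cn n) (hρ' : IsReflection n V' ρ')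
    (ℓ' : Cn n) (hℓ' : ℓ' = pSF n ρ ℓ α (cstar α) (conjSL n ℓ))
    (hℓ'compl : Bf n ℓ' (ρ' ℓ') ≠ 0)
    (r : ℂ → (Cn n →ₗ[ℂ] Cn n))
    (hr : ∀ lam, r lam = (pSF n ρ' ℓ' (cstar α) lam).comp (pSF n ρ ℓ α lam))
    (A : Cn n →ₗ[ℂ] Cn n)
    (hA : A = (GammaL n ℓ (ρ ℓ) ((psi α 0)⁻¹)).comp
        ((GammaL n ℓ' (ρ' ℓ') ((psi (cstar α) 0)⁻¹)).comp
          ((pSFinf n ρ' ℓ' (cstar α)).comp (pSFinf n ρ ℓ α)))) :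
    (∃ K : Cn n →ₗ[ℂ] Cn n,
      ∀ lam : ℂ, lam ≠ α → lam ≠ -α → lam ≠ cstar α → lam ≠ -cstar α →
        (r (-lam)).comp ρ = K.comp (r lam)) ∧
    (∀ x ∈ V, A x ∈ V) ∧
    ∀ h : ∀ x ∈ V, A x ∈ V, LinearMap.det (A.restrict h) = 1 := by
  classical
  -- scalar facts
  have hα1 : (1:ℂ) + α ≠ 0 := one_add_a hα hαabs
  have hα2 : (1:ℂ) - α ≠ 0 := one_sub_a hα hαabs
  have hs0 : cstar α ≠ 0 := cstar_ne_zero hα hαabs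
  have hsabs : ‖cstar α‖ ≠ 1 := cstar_abs hα hαabs
  have hs1 : (1:ℂ) + cstar α ≠ 0 := one_add_a hs0 hsabs
  have hs2 : (1:ℂ) - cstar α ≠ 0 := one_sub_a hs0 hsabs
  have hψ0 : psi α 0 ≠ 0 := psi_zero_ne hα hα1 hα2
  have hψs0 : psi (cstar α) 0 ≠ 0 := psi_zero_ne hs0 hs1 hs2
  -- the unprimed reflection package
  have hsp := span_decomp V hVnd
  have hsq := refl_sq hρ hsp
  have horth := refl_orth hρ hsp
  have hρℓnull : Bf n (ρ ℓ) (ρ ℓ) = 0 := by rw [horth ℓ ℓ]; exact hℓnull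
  -- ℓ' is null
  have hm : psi α (cstar α) ≠ 0 :=
    psi_ne_zero hα1 hα2 (cstar_sub_a hα hαabs) (cstar_add_a hα hαabs)
  have hℓ'null : Bf n ℓ' ℓ' = 0 := by
    rw [hℓ']
    simp only [pSF]
    rw [GammaL_orth hℓnull hρℓnull hℓcompl hm, Bf_conj, hℓnull, map_zero]
  -- V' membership and nondegeneracy
  have hmemV' : ∀ x : Cn n, x ∈ V' ↔ ∃ v ∈ V, GammaL n ℓ (ρ ℓ) (psi α 0) v = x := by
    intro x
    rw [hV']
    simp only [pSF]
    exact Submodule.mem_map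
  have hG0a : (GammaL n ℓ (ρ ℓ) (psi α 0)).comp (GammaL n ℓ (ρ ℓ) (psi α 0)⁻¹)
      = LinearMap.id := by
    rw [GammaL_comp hℓnull hρℓnull hℓcompl, mul_inv_cancel₀ hψ0,
      GammaL_one hℓnull hρℓnull hℓcompl]
  have hG0b : (GammaL n ℓ (ρ ℓ) (psi α 0)⁻¹).comp (GammaL n ℓ (ρ ℓ) (psi α 0))
      = LinearMap.id := by
    rw [GammaL_comp hℓnull hρℓnull hℓcompl, inv_mul_cancel₀ hψ0,
      GammaL_one hℓnull hρℓnull hℓcompl]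
  have hV'nd : ∀ v ∈ V', (∀ w ∈ V', Bf n v w = 0) → v = 0 := by
    intro v' hv' hall
    obtain ⟨v, hv, rfl⟩ := (hmemV' v').1 hv'
    have hzero : v = 0 := by
      refine hVnd v hv fun w hw => ?_
      rw [← GammaL_orth hℓnull hρℓnull hℓcompl hψ0 v w]
      exact hall _ ((hmemV' _).2 ⟨w, hw, rfl⟩)
    rw [hzero, map_zero]
  -- the primed reflection package
  have hsp' := span_decomp V' hV'nd
  have hsq' := refl_sq hρ' hsp'
  have horth' := refl_orth hρ' hsp'
  have hρ'ℓ'null : Bf n (ρ' ℓ') (ρ' ℓ') = 0 := by rw [horth' ℓ' ℓ']; exact hℓ'null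
  -- perp V' is the image of perp V
  have hperp' : ∀ x ∈ perp n V', ∃ w ∈ perp n V, x = GammaL n ℓ (ρ ℓ) (psi α 0) w := by
    intro x hx
    obtain ⟨v, hv, w, hw, hy⟩ := hsp (GammaL n ℓ (ρ ℓ) (psi α 0)⁻¹ x)
    have hGx : GammaL n ℓ (ρ ℓ) (psi α 0) (GammaL n ℓ (ρ ℓ) (psi α 0)⁻¹ x) = x :=
      LinearMap.congr_fun hG0a x
    have hv0 : v = 0 := by
      refine hVnd v hv fun v₂ hv₂ => ?_
      have h1 : Bf n (v + w) v₂ = Bf n v v₂ := by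
        rw [Bf_add_left, mem_perp.1 hw v₂ hv₂, add_zero]
      have h2 : Bf n (v + w) v₂ = 0 := by
        rw [← GammaL_orth hℓnull hρℓnull hℓcompl hψ0 (v+w) v₂, ← hy, hGx]
        exact mem_perp.1 hx _ ((hmemV' _).2 ⟨v₂, hv₂, rfl⟩)
      rw [← h1, h2]
    refine ⟨w, hw, ?_⟩
    rw [← hGx, hy, hv0, zero_add]
  -- identification of ρ'
  have hρ'eq : (GammaL n ℓ (ρ ℓ) ((psi α 0) ^ 2)).comp ρ = ρ' := by
    refine refl_unique hρ' hsp' _ ⟨?_, ?_⟩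
    · intro x hx
      obtain ⟨v, hv, rfl⟩ := (hmemV' x).1 hx
      rw [LinearMap.comp_apply]
      have h1 : ρ (GammaL n ℓ (ρ ℓ) (psi α 0) v) = GammaL n ℓ (ρ ℓ) (psi α 0)⁻¹ (ρ v) :=
        LinearMap.congr_fun (rho_comp_GammaL hsq horth (psi α 0)) v
      rw [h1, hρ.1 v hv]
      have h2 := LinearMap.congr_fun
        (GammaL_comp hℓnull hρℓnull hℓcompl ((psi α 0) ^ 2) (psi α 0)⁻¹) v
      rw [LinearMap.comp_apply] at h2
      rw [h2]
      congr 1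
      rw [sq, mul_assoc, mul_inv_cancel₀ hψ0, mul_one]
    · intro x hx
      obtain ⟨w, hw, rfl⟩ := hperp' x hx
      rw [LinearMap.comp_apply]
      have h1 : ρ (GammaL n ℓ (ρ ℓ) (psi α 0) w) = GammaL n ℓ (ρ ℓ) (psi α 0)⁻¹ (ρ w) :=
        LinearMap.congr_fun (rho_comp_GammaL hsq horth (psi α 0)) w
      rw [h1, hρ.2 w hw, map_neg]
      have h2 := LinearMap.congr_fun
        (GammaL_comp hℓnull hρℓnull hℓcompl ((psi α 0) ^ 2) (psi α 0)⁻¹) w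
      rw [LinearMap.comp_apply] at h2
      rw [map_neg, h2]
      congr 2
      rw [sq, mul_assoc, mul_inv_cancel₀ hψ0, mul_one]
  -- Step A : ρ' ∘ p(λ) = p(-λ) ∘ ρ
  have stepA : ∀ lam : ℂ, lam ≠ α → lam ≠ -α →
      ρ'.comp (GammaL n ℓ (ρ ℓ) (psi α lam)) =
        (GammaL n ℓ (ρ ℓ) (psi α (-lam))).comp ρ := by
    intro lam h1 h2
    rw [← hρ'eq, LinearMap.comp_assoc, rho_comp_GammaL hsq horth, ← LinearMap.comp_assoc,
      GammaL_comp hℓnull hρℓnull hℓcompl, psi_mul_neg hα hα1 hα2 h1 h2]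
  -- Step A' (primed)
  have key : ∀ lam : ℂ, lam ≠ cstar α → lam ≠ -cstar α →
      (GammaL n ℓ' (ρ' ℓ') (psi (cstar α) (-lam))).comp ρ'
        = (ρ'.comp (GammaL n ℓ' (ρ' ℓ') (((psi (cstar α) 0) ^ 2)⁻¹))).comp
            (GammaL n ℓ' (ρ' ℓ') (psi (cstar α) lam)) := by
    intro lam h3 h4
    rw [LinearMap.comp_assoc, GammaL_comp hℓ'null hρ'ℓ'null hℓ'compl,
      rho_comp_GammaL hsq' horth', mul_inv, inv_inv, psi_mul_neg hs0 hs1 hs2 h3 h4]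
  refine ⟨⟨ρ'.comp (GammaL n ℓ' (ρ' ℓ') (((psi (cstar α) 0) ^ 2)⁻¹)), ?_⟩, ?_⟩
  · -- part (i)
    intro lam hl1 hl2 hl3 hl4
    rw [hr, hr]
    simp only [pSF]
    rw [← LinearMap.comp_assoc, ← key lam hl3 hl4, LinearMap.comp_assoc,
      ← stepA lam hl1 hl2, LinearMap.comp_assoc]
  -- part (ii)
  -- rewrite A as T' ∘ T
  have hmuls : (psi (cstar α) 0)⁻¹ * ((1 + cstar α) / (1 - cstar α)) = -1 := by
    have hd : (1 + cstar α) / (1 - cstar α) ≠ 0 := div_ne_zero hs1 hs2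
    rw [psi_zero_eq hs0 hs2, inv_neg, neg_mul, inv_mul_cancel₀ hd]
  have hmulα : psi α 0 * (-1) = (1 + α) / (1 - α) := by
    rw [psi_zero_eq hα hα2]; ring
  have hA2 : A = (GammaL n ℓ (ρ ℓ) ((psi α 0)⁻¹)).comp
      ((GammaL n ℓ' (ρ' ℓ') (-1)).comp (GammaL n ℓ (ρ ℓ) ((1 + α) / (1 - α)))) := by
    rw [hA]
    congr 1
    simp only [pSFinf]
    rw [← LinearMap.comp_assoc, GammaL_comp hℓ'null hρ'ℓ'null hℓ'compl, hmuls]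
  have hA3 : A = ((GammaL n ℓ (ρ ℓ) ((psi α 0)⁻¹)).comp
      ((GammaL n ℓ' (ρ' ℓ') (-1)).comp (GammaL n ℓ (ρ ℓ) (psi α 0)))).comp
        (GammaL n ℓ (ρ ℓ) (-1)) := by
    rw [hA2, LinearMap.comp_assoc, LinearMap.comp_assoc,
      GammaL_comp hℓnull hρℓnull hℓcompl, hmulα]
  -- membership facts
  have hGmapV' : ∀ v ∈ V, GammaL n ℓ (ρ ℓ) (psi α 0) v ∈ V' :=
    fun v hv => (hmemV' _).2 ⟨v, hv, rfl⟩
  have hGinvV : ∀ x ∈ V', GammaL n ℓ (ρ ℓ) (psi α 0)⁻¹ x ∈ V := by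
    intro x hx
    obtain ⟨v, hv, rfl⟩ := (hmemV' x).1 hx
    have h1 : GammaL n ℓ (ρ ℓ) (psi α 0)⁻¹ (GammaL n ℓ (ρ ℓ) (psi α 0) v) = v :=
      LinearMap.congr_fun hG0b v
    rw [h1]; exact hv
  have hMmem' : ∀ x ∈ V', GammaL n ℓ' (ρ' ℓ') (-1) x ∈ V' :=
    refl_factor_mem hρ' hsp' hℓ'null hℓ'compl
  have hTmem : ∀ v ∈ V, GammaL n ℓ (ρ ℓ) (-1) v ∈ V :=
    refl_factor_mem hρ hsp hℓnull hℓcompl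
  have hT'mem : ∀ v ∈ V, ((GammaL n ℓ (ρ ℓ) ((psi α 0)⁻¹)).comp
      ((GammaL n ℓ' (ρ' ℓ') (-1)).comp (GammaL n ℓ (ρ ℓ) (psi α 0)))) v ∈ V := by
    intro v hv
    simp only [LinearMap.comp_apply]
    exact hGinvV _ (hMmem' _ (hGmapV' v hv))
  have hAmem : ∀ x ∈ V, A x ∈ V := by
    intro x hx
    rw [hA3, LinearMap.comp_apply]
    exact hT'mem _ (hTmem x hx)
  refine ⟨hAmem, ?_⟩
  intro h
  -- determinant computation
  set T : Cn n →ₗ[ℂ] Cn n := GammaL n ℓ (ρ ℓ) (-1) with hTdef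
  set T' : Cn n →ₗ[ℂ] Cn n := (GammaL n ℓ (ρ ℓ) ((psi α 0)⁻¹)).comp
      ((GammaL n ℓ' (ρ' ℓ') (-1)).comp (GammaL n ℓ (ρ ℓ) (psi α 0))) with hT'def
  have hAr : A.restrict h = (T'.restrict hT'mem).comp (T.restrict hTmem) := by
    refine LinearMap.ext fun x => Subtype.ext ?_
    simp only [LinearMap.restrict_apply, LinearMap.comp_apply]
    rw [hA3]
    rfl
  -- the equivalence V ≃ V'
  let F1 : ↥V →ₗ[ℂ] ↥V' := LinearMap.codRestrict V'
    ((GammaL n ℓ (ρ ℓ) (psi α 0)).comp V.subtype) (fun v => hGmapV' v v.2)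
  let F2 : ↥V' →ₗ[ℂ] ↥V := LinearMap.codRestrict V
    ((GammaL n ℓ (ρ ℓ) (psi α 0)⁻¹).comp V'.subtype) (fun x => hGinvV x x.2)
  have h12 : F1.comp F2 = LinearMap.id := by
    refine LinearMap.ext fun x => Subtype.ext ?_
    have := LinearMap.congr_fun hG0a (x : Cn n)
    exact this
  have h21 : F2.comp F1 = LinearMap.id := by
    refine LinearMap.ext fun x => Subtype.ext ?_
    have := LinearMap.congr_fun hG0b (x : Cn n)
    exact this
  let e : ↥V ≃ₗ[ℂ] ↥V' := LinearEquiv.ofLinear F1 F2 h12 h21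
  set Mr := (GammaL n ℓ' (ρ' ℓ') (-1)).restrict hMmem' with hMrdef
  have hT'r : T'.restrict hT'mem
      = (e.symm : ↥V' →ₗ[ℂ] ↥V).comp (Mr.comp (e : ↥V →ₗ[ℂ] ↥V')) := by
    refine LinearMap.ext fun x => Subtype.ext ?_
    simp only [LinearMap.restrict_apply, LinearMap.comp_apply]
    rfl
  have hdetT' : LinearMap.det (T'.restrict hT'mem) = LinearMap.det Mr := by
    have hc := LinearMap.det_conj Mr e.symm
    rw [LinearEquiv.symm_symm] at hc
    rw [hT'r, ← hc]
  have hdetMr : LinearMap.det Mr = -1 :=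
    refl_factor_det hρ' hsp' hℓ'null hℓ'compl hMmem'
  have hdetT : LinearMap.det (T.restrict hTmem) = -1 :=
    refl_factor_det hρ hsp hℓnull hℓcompl hTmem
  rw [hAr, LinearMap.det_comp, hdetT', hdetMr, hdetT]
  norm_num


end
end

section
/- Let j : ℂ⁴ → ℂ⁴ be a quaternionic structure, i.e. a conjugate-linear map with j ∘ j = −id. Let X be a ℂ-linear endomorphism of ℂ⁴ commuting with j (X ∘ j = j ∘ X), let μ₀ ∈ ℂ ∖ ℝ and μ₁ := conj(μ₀). Then X² − (μ₀+μ₁)X + μ₀μ₁ id = 0 if and only if the μ₀-eigenspace W := ker(X − μ₀ id) has complex dimension 2. In that case jW = ker(X − μ₁ id) and ℂ⁴ = W ⊕ jW. -/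
noncomputable section

/-- The model `ℂ⁴`. -/
abbrev C4 := Fin 4 → ℂ

/-- Let `j` be a quaternionic structure on `ℂ⁴` (a conjugate-linear
map with `j² = -1`), `X` a `ℂ`-linear endomorphism commuting with `j`, `μ₀ ∈ ℂ ∖ ℝ`
and `μ₁ = conj μ₀`.  Then `X² - (μ₀+μ₁)X + μ₀μ₁ = 0` iff the `μ₀`-eigenspace
`W = ker (X - μ₀)` is 2-dimensional; in that case `jW = ker (X - μ₁)` and
`ℂ⁴ = W ⊕ jW`. -/
theorem statement11
    (j : C4 →ₛₗ[starRingEnd ℂ] C4) (hj : ∀ v, j (j v) = -v)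
    (X : C4 →ₗ[ℂ] C4) (hXj : ∀ v, X (j v) = j (X v))
    (μ₀ : ℂ) (hμ₀ : μ₀.im ≠ 0) (μ₁ : ℂ) (hμ₁ : μ₁ = starRingEnd ℂ μ₀) :
    (X ∘ₗ X - (μ₀ + μ₁) • X + (μ₀ * μ₁) • LinearMap.id = 0 ↔
      Module.finrank ℂ (LinearMap.ker (X - μ₀ • LinearMap.id)) = 2) ∧
    (X ∘ₗ X - (μ₀ + μ₁) • X + (μ₀ * μ₁) • LinearMap.id = 0 →
      Submodule.map j (LinearMap.ker (X - μ₀ • LinearMap.id)) =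
          LinearMap.ker (X - μ₁ • LinearMap.id) ∧
        IsCompl (LinearMap.ker (X - μ₀ • LinearMap.id))
          (Submodule.map j (LinearMap.ker (X - μ₀ • LinearMap.id)))) := by
  have hne : μ₀ ≠ μ₁ := by
    intro h
    apply hμ₀
    have := congrArg Complex.im h
    rw [hμ₁] at this
    simp at this
    linarith [this]
  set A : C4 →ₗ[ℂ] C4 := X - μ₀ • LinearMap.id with hA
  set B : C4 →ₗ[ℂ] C4 := X - μ₁ • LinearMap.id with hB
  set W := LinearMap.ker A with hW
  set W' := LinearMap.ker B with hW'
  set P : C4 →ₗ[ℂ] C4 := X ∘ₗ X - (μ₀ + μ₁) • X + (μ₀ * μ₁) • LinearMap.id with hP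
  have hmemW : ∀ v : C4, v ∈ W ↔ X v = μ₀ • v := by
    intro v
    rw [hW, LinearMap.mem_ker, hA]
    constructor
    · intro h; have := sub_eq_zero.mp (by simpa using h); simpa using this
    · intro h; simp [h]
  have hmemW' : ∀ v : C4, v ∈ W' ↔ X v = μ₁ • v := by
    intro v
    rw [hW', LinearMap.mem_ker, hB]
    constructor
    · intro h; have := sub_eq_zero.mp (by simpa using h); simpa using this
    · intro h; simp [h]
  -- j maps W into W' and W' into W
  have hjWW' : ∀ v ∈ W, j v ∈ W' := by
    intro v hv
    rw [hmemW'] ; rw [hmemW] at hv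
    rw [hXj, hv, j.map_smulₛₗ, ← hμ₁]
  have hjW'W : ∀ v ∈ W', j v ∈ W := by
    intro v hv
    rw [hmemW] ; rw [hmemW'] at hv
    rw [hXj, hv, j.map_smulₛₗ]
    congr 1
    rw [hμ₁, Complex.conj_conj]
  have hjW : Submodule.map j W = W' := by
    apply le_antisymm
    · rintro _ ⟨v, hv, rfl⟩
      exact hjWW' v hv
    · intro w hw
      refine ⟨-(j w), Submodule.neg_mem _ (hjW'W w hw), ?_⟩
      rw [map_neg, hj]
      simp
  have hdim : Module.finrank ℂ W = Module.finrank ℂ W' := by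
    let e : W ≃+ W' := {
      toFun := fun w => ⟨j w, hjWW' w w.2⟩
      invFun := fun w => ⟨-(j w), Submodule.neg_mem _ (hjW'W w w.2)⟩
      left_inv := fun w => by
        ext
        simp [hj]
      right_inv := fun w => by
        ext
        simp [hj]
      map_add' := fun a b => by
        ext
        simp }
    have hrank : Module.rank ℂ W = Module.rank ℂ W' := by
      refine rank_eq_of_equiv_equiv (ZeroHom.mk (starRingEnd ℂ) (by simp)) e
        (Function.Involutive.bijective (by intro x; simp)) ?_
      intro r m
      apply Subtype.ext
      show j (r • (m : C4)) = starRingEnd ℂ r • j (m : C4)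
      exact j.map_smulₛₗ r m
    simp only [Module.finrank]
    rw [hrank]
  have hdisj : W ⊓ W' = ⊥ := by
    rw [eq_bot_iff]
    intro v hv
    obtain ⟨h1, h2⟩ := Submodule.mem_inf.mp hv
    rw [hmemW] at h1; rw [hmemW'] at h2
    have : (μ₀ - μ₁) • v = 0 := by rw [sub_smul, ← h1, ← h2, sub_self]
    rcases smul_eq_zero.mp this with h | h
    · exact absurd (sub_eq_zero.mp h) hne
    · simp [h]
  have hfr4 : Module.finrank ℂ C4 = 4 := by simp
  have hpolyAB : ∀ v : C4, P v = A (B v) := by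
    intro v
    simp only [hP, hA, hB, LinearMap.add_apply, LinearMap.sub_apply, LinearMap.smul_apply,
      LinearMap.comp_apply, LinearMap.id_apply, map_sub, map_smul]
    module
  have hpolyBA : ∀ v : C4, P v = B (A v) := by
    intro v
    simp only [hP, hA, hB, LinearMap.add_apply, LinearMap.sub_apply, LinearMap.smul_apply,
      LinearMap.comp_apply, LinearMap.id_apply, map_sub, map_smul]
    module
  have hsup : P = 0 → W ⊔ W' = ⊤ := by
    intro h0
    rw [eq_top_iff]
    intro v _
    have hv1 : B v ∈ W := by
      rw [hW, LinearMap.mem_ker, ← hpolyAB, h0, LinearMap.zero_apply]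
    have hv2 : A v ∈ W' := by
      rw [hW', LinearMap.mem_ker, ← hpolyBA, h0, LinearMap.zero_apply]
    have hv : v = (μ₀ - μ₁)⁻¹ • (B v - A v) := by
      have : B v - A v = (μ₀ - μ₁) • v := by
        simp only [hA, hB, LinearMap.sub_apply, LinearMap.smul_apply, LinearMap.id_apply]
        module
      rw [this, smul_smul, inv_mul_cancel₀ (sub_ne_zero.mpr hne), one_smul]
    rw [hv]
    exact Submodule.smul_mem _ _ (Submodule.sub_mem _ (Submodule.mem_sup_left hv1)
      (Submodule.mem_sup_right hv2))
  constructor; constructor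
  · -- poly → dim = 2
    intro h0
    have := Submodule.finrank_sup_add_finrank_inf_eq W W'
    rw [hsup h0, hdisj, ← hdim] at this
    simp only [finrank_top, hfr4, finrank_bot] at this
    omega
  · -- dim = 2 → poly
    intro hd
    have htop : W ⊔ W' = ⊤ := by
      apply Submodule.eq_top_of_finrank_eq
      have := Submodule.finrank_sup_add_finrank_inf_eq W W'
      rw [hdisj, ← hdim, hd] at this
      simp only [finrank_bot] at this
      rw [hfr4]
      omega
    apply LinearMap.ext
    intro v
    have hv : v ∈ W ⊔ W' := htop ▸ Submodule.mem_top
    obtain ⟨w, hw, w', hw', rfl⟩ := Submodule.mem_sup.mp hv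
    rw [LinearMap.zero_apply, hpolyAB (w + w')]
    have hBw : B (w + w') = (μ₀ - μ₁) • w := by
      rw [hmemW] at hw; rw [hmemW'] at hw'
      simp only [hB, LinearMap.sub_apply, LinearMap.smul_apply, LinearMap.id_apply,
        map_add, hw, hw']
      module
    rw [hBw, map_smul]
    have hAw : A w = 0 := LinearMap.mem_ker.mp hw
    rw [hAw, smul_zero]
  · -- second part
    intro h0
    refine ⟨hjW, ?_⟩
    rw [hjW]
    exact ⟨disjoint_iff.mpr hdisj, codisjoint_iff.mpr (hsup h0)⟩

end
end

section
/- Let M be a complex vector space, μ₀ ≠ μ₁ ∈ ℂ, and let X, D, b, b* be ℂ-linear endomorphisms of M with (X − μ₀)(X − μ₁) = 0. Then the two identities (X − μ₀) ∘ (D + b ∘ (X − μ₁)) = 0 and (X − μ₁) ∘ (D + b* ∘ (X − μ₀)) = 0 hold simultaneously if and only if (μ₁ − μ₀)D = X(b* − b)X + (μ₀ b − μ₁ b*)X + X(μ₁ b − μ₀ b*) + μ₀μ₁(b* − b). -/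
/-- Let `M` be a complex vector space, `μ₀ ≠ μ₁ ∈ ℂ`, and
`X, D, b, b*` endomorphisms of `M` with `(X - μ₀)(X - μ₁) = 0`.  Then
`(X - μ₀)(D + b(X - μ₁)) = 0` and `(X - μ₁)(D + b*(X - μ₀)) = 0` hold simultaneously
iff `(μ₁ - μ₀)D = X(b* - b)X + (μ₀b - μ₁b*)X + X(μ₁b - μ₀b*) + μ₀μ₁(b* - b)`. -/
theorem statement12 (M : Type*) [AddCommGroup M] [Module ℂ M]
    (μ₀ μ₁ : ℂ) (hμ : μ₀ ≠ μ₁)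
    (X D b bs : Module.End ℂ M)
    (hX : (X - μ₀ • 1) * (X - μ₁ • 1) = 0) :
    ((X - μ₀ • 1) * (D + b * (X - μ₁ • 1)) = 0 ∧
      (X - μ₁ • 1) * (D + bs * (X - μ₀ • 1)) = 0) ↔
    (μ₁ - μ₀) • D =
      X * (bs - b) * X + (μ₀ • b - μ₁ • bs) * X + X * (μ₁ • b - μ₀ • bs)
        + (μ₀ * μ₁) • (bs - b) := by
  set A := X - μ₀ • (1 : Module.End ℂ M) with hA
  set B := X - μ₁ • (1 : Module.End ℂ M) with hB
  set c := μ₁ - μ₀ with hcdef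
  have hc0 : c ≠ 0 := sub_ne_zero.mpr (Ne.symm hμ)
  have hAB : A = B + c • (1 : Module.End ℂ M) := by
    rw [hA, hB, hcdef]; module
  have hAA : A * A = c • A := by
    calc A * A = A * B + c • A := by
          rw [hAB]; simp [mul_add, mul_smul_comm]
      _ = c • A := by rw [hX]; simp
  have hBA : B * A = 0 := by
    have h : B * A = A * A - c • A := by
      rw [hAB]; simp [add_mul, smul_mul_assoc]
    rw [h, hAA, sub_self]
  have hBB : B * B = -(c • B) := by
    have h : B * B = B * A - c • B := by
      rw [hAB]; simp [mul_add, mul_smul_comm]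
    rw [h, hBA, zero_sub]
  have key : X * (bs - b) * X + (μ₀ • b - μ₁ • bs) * X + X * (μ₁ • b - μ₀ • bs)
        + (μ₀ * μ₁) • (bs - b) = B * bs * A - A * b * B := by
    rw [hA, hB]
    simp only [sub_mul, mul_sub, smul_mul_assoc, mul_smul_comm, mul_one, one_mul,
      smul_smul, smul_sub, mul_assoc]
    module
  rw [key]
  have hABt : ∀ t : Module.End ℂ M, A * (B * t) = 0 := fun t => by
    rw [← mul_assoc, hX, zero_mul]
  have hAAt : ∀ t : Module.End ℂ M, A * (A * t) = c • (A * t) := fun t => by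
    rw [← mul_assoc, hAA, smul_mul_assoc]
  have hBAt : ∀ t : Module.End ℂ M, B * (A * t) = 0 := fun t => by
    rw [← mul_assoc, hBA, zero_mul]
  have hBBt : ∀ t : Module.End ℂ M, B * (B * t) = -(c • (B * t)) := fun t => by
    rw [← mul_assoc, hBB, neg_mul, smul_mul_assoc]
  have hsub : ∀ t : Module.End ℂ M, c • t = A * t - B * t := fun t => by
    rw [hAB]; simp [add_mul, smul_mul_assoc]
  constructor
  · rintro ⟨h1, h2⟩
    have e1 : A * D = -(A * b * B) := by
      rw [mul_add, ← mul_assoc] at h1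
      exact eq_neg_of_add_eq_zero_left h1
    have e2 : B * D = -(B * bs * A) := by
      rw [mul_add, ← mul_assoc] at h2
      exact eq_neg_of_add_eq_zero_left h2
    rw [hsub D, e1, e2]
    abel
  · intro h
    constructor
    · have e : c • (A * (D + b * B)) = 0 := by
        rw [← mul_smul_comm, smul_add, h]
        simp only [mul_add, mul_sub, mul_assoc, hABt, hAAt, mul_smul_comm]
        abel
      exact (smul_eq_zero.mp e).resolve_left hc0
    · have e : c • (B * (D + bs * A)) = 0 := by
        rw [← mul_smul_comm, smul_add, h]
        simp only [mul_add, mul_sub, mul_assoc, hBAt, hBBt, mul_smul_comm]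
        abel
      exact (smul_eq_zero.mp e).resolve_left hc0
end

section
/- Let A be a complex unital associative normed algebra, E a real normed vector space, U ⊆ E open, and μ₀, μ₁ ∈ ℂ. Let β, β* : U → L(E, A) be maps into continuous ℝ-linear maps from E to A, and let X : U → A be differentiable on U and satisfy, for all u ∈ U and v ∈ E, the Riccati equation (μ₁−μ₀)·(D_vX)(u) = X(u)(β*_u(v) − β_u(v))X(u) + (μ₀ β_u(v) − μ₁ β*_u(v))X(u) + X(u)(μ₁ β_u(v) − μ₀ β*_u(v)) + μ₀μ₁(β*_u(v) − β_u(v)), where (D_vX)(u) denotes the Fréchet derivative of X at u in direction v. Define I : U → A by I(u) := X(u)² − (μ₀+μ₁)X(u) + μ₀μ₁·1. Then I is differentiable and satisfies the linear equation (μ₁−μ₀)·(D_vI)(u) = I(u)(β*_u(v) − β_u(v))X(u) + X(u)(β*_u(v) − β_u(v))I(u) + I(u)(μ₁ β_u(v) − μ₀ β*_u(v)) + (μ₀ β_u(v) − μ₁ β*_u(v))I(u) for all u ∈ U, v ∈ E. -/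
/-- Let `A` be a complex unital associative normed algebra, `E` a
real normed space, `U ⊆ E` open, and let `X : U → A` satisfy the Riccati equation
`(μ₁-μ₀) dX = X(β*-β)X + (μ₀β-μ₁β*)X + X(μ₁β-μ₀β*) + μ₀μ₁(β*-β)` on `U`.  Then
`I := X² - (μ₀+μ₁)X + μ₀μ₁` is differentiable and satisfies the linear equation
`(μ₁-μ₀) dI = I(β*-β)X + X(β*-β)I + I(μ₁β-μ₀β*) + (μ₀β-μ₁β*)I`. -/
theorem statement13
    (A : Type*) [NormedRing A] [NormedAlgebra ℂ A]
    (E : Type*) [NormedAddCommGroup E] [NormedSpace ℝ E]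
    (U : Set E) (hU : IsOpen U)
    (μ₀ μ₁ : ℂ)
    (β βs : E → (E →L[ℝ] A))
    (X : E → A)
    (hXdiff : ∀ u ∈ U, DifferentiableAt ℝ X u)
    (hRiccati : ∀ u ∈ U, ∀ v : E,
      (μ₁ - μ₀) • fderiv ℝ X u v =
        X u * (βs u v - β u v) * X u + (μ₀ • β u v - μ₁ • βs u v) * X u
          + X u * (μ₁ • β u v - μ₀ • βs u v) + (μ₀ * μ₁) • (βs u v - β u v))
    (I : E → A)
    (hI : ∀ u, I u = X u ^ 2 - (μ₀ + μ₁) • X u + (μ₀ * μ₁) • (1 : A)) :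
    ∀ u ∈ U, DifferentiableAt ℝ I u ∧
      ∀ v : E,
        (μ₁ - μ₀) • fderiv ℝ I u v =
          I u * (βs u v - β u v) * X u + X u * (βs u v - β u v) * I u
            + I u * (μ₁ • β u v - μ₀ • βs u v) + (μ₀ • β u v - μ₁ • βs u v) * I u := by
  intro u hu
  have hI' : I = fun w => X w * X w - (μ₀ + μ₁) • X w + (μ₀ * μ₁) • (1 : A) := by
    funext w; rw [hI w, sq]
  have hD : HasFDerivAt X (fderiv ℝ X u) u := (hXdiff u hu).hasFDerivAt
  set D := fderiv ℝ X u with hDdef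
  have hIder : HasFDerivAt I
      (X u • D + D.smulRight (X u) - (μ₀ + μ₁) • D) u := by
    rw [hI']
    exact ((hD.mul' hD).sub (hD.const_smul (μ₀ + μ₁))).add_const _
  refine ⟨hIder.differentiableAt, fun v => ?_⟩
  have hfd : fderiv ℝ I u v = X u * D v + D v * X u - (μ₀ + μ₁) • D v := by
    rw [hIder.fderiv]
    simp [ContinuousLinearMap.smul_apply, smul_eq_mul]
  have key := hRiccati u hu v
  rw [hfd, hI u, sq]
  set x := X u
  set d := D v
  set b := β u v
  set s := βs u v
  have expand : (μ₁ - μ₀) • (x * d + d * x - (μ₀ + μ₁) • d) =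
      x * ((μ₁ - μ₀) • d) + ((μ₁ - μ₀) • d) * x - (μ₀ + μ₁) • ((μ₁ - μ₀) • d) := by
    simp only [mul_smul_comm, smul_mul_assoc, smul_smul, smul_add, smul_sub]
    module
  rw [expand, key]
  simp only [sub_mul, mul_sub, add_mul, mul_add, smul_mul_assoc, mul_smul_comm, smul_smul,
    smul_sub, smul_add, mul_one, one_mul, mul_assoc]
  module
end

section
/- Let A be a complex unital associative normed algebra, E a real normed vector space, U ⊆ E open, and μ₀ ≠ μ₁ ∈ ℂ. Let β, β* : U → L(E, A) be differentiable A-valued 1-forms which are flat, i.e. for all u ∈ U and v, w ∈ E: (D_vβ)(u)(w) − (D_wβ)(u)(v) + β_u(v)β_u(w) − β_u(w)β_u(v) = 0 and likewise for β*. Define the 2×2-matrix-valued 1-form ω by ω_u(v) := (1/(μ₁−μ₀))·[[μ₁β*_u(v) − μ₀β_u(v), μ₀μ₁(β_u(v) − β*_u(v))], [β*_u(v) − β_u(v), μ₁β_u(v) − μ₀β*_u(v)]], with entries in A. Then ω is flat: for all u ∈ U and v, w ∈ E, (D_vω)(u)(w) − (D_wω)(u)(v) + ω_u(v)ω_u(w)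 − ω_u(w)ω_u(v) = 0. -/
attribute [local instance] Matrix.normedAddCommGroup Matrix.normedSpace

set_option maxHeartbeats 1000000 in
/-- Let `A` be a complex unital associative normed algebra, `E` a
real normed space, `U ⊆ E` open, `μ₀ ≠ μ₁ ∈ ℂ`, and let `β, β*` be differentiable flat
`A`-valued 1-forms on `U`.  Then the `2×2`-matrix-valued 1-form
`ω = (1/(μ₁-μ₀)) [[μ₁β* - μ₀β, μ₀μ₁(β - β*)], [β* - β, μ₁β - μ₀β*]]` is flat. -/
theorem statement14
    (A : Type*) [NormedRing A] [NormedAlgebra ℂ A]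
    (E : Type*) [NormedAddCommGroup E] [NormedSpace ℝ E]
    (U : Set E) (hU : IsOpen U)
    (μ₀ μ₁ : ℂ) (hμ : μ₀ ≠ μ₁)
    (β βs : E → (E →L[ℝ] A))
    (hβdiff : ∀ u ∈ U, DifferentiableAt ℝ β u)
    (hβsdiff : ∀ u ∈ U, DifferentiableAt ℝ βs u)
    (hβflat : ∀ u ∈ U, ∀ v w : E,
      fderiv ℝ β u v w - fderiv ℝ β u w v + β u v * β u w - β u w * β u v = 0)
    (hβsflat : ∀ u ∈ U, ∀ v w : E,
      fderiv ℝ βs u v w - fderiv ℝ βs u w v + βs u v * βs u w - βs u w * βs u v = 0)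
    (ω : E → E → Matrix (Fin 2) (Fin 2) A)
    (hω : ∀ u v, ω u v = (μ₁ - μ₀)⁻¹ •
      Matrix.of ![![μ₁ • βs u v - μ₀ • β u v, (μ₀ * μ₁) • (β u v - βs u v)],
        ![βs u v - β u v, μ₁ • β u v - μ₀ • βs u v]]) :
    ∀ u ∈ U, ∀ v w : E,
      fderiv ℝ (fun x => ω x w) u v - fderiv ℝ (fun x => ω x v) u w
        + ω u v * ω u w - ω u w * ω u v = 0 := by
  intro u hu v w
  have hμ1 : μ₁ - μ₀ ≠ 0 := sub_ne_zero.mpr hμ.symm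
  have hB := (hβdiff u hu).hasFDerivAt
  have hBs := (hβsdiff u hu).hasFDerivAt
  have hap : ∀ y : E, HasFDerivAt (fun x => β x y)
      ((ContinuousLinearMap.apply ℝ A y).comp (fderiv ℝ β u)) u := fun y =>
    (ContinuousLinearMap.apply ℝ A y).hasFDerivAt.comp u hB
  have haps : ∀ y : E, HasFDerivAt (fun x => βs x y)
      ((ContinuousLinearMap.apply ℝ A y).comp (fderiv ℝ βs u)) u := fun y =>
    (ContinuousLinearMap.apply ℝ A y).hasFDerivAt.comp u hBs
  set By : E → (E →L[ℝ] A) := fun y => (ContinuousLinearMap.apply ℝ A y).comp (fderiv ℝ β u) with hBy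
  set Bsy : E → (E →L[ℝ] A) := fun y => (ContinuousLinearMap.apply ℝ A y).comp (fderiv ℝ βs u) with hBsy
  have key : ∀ y : E, HasFDerivAt (fun x => ω x y)
      (ContinuousLinearMap.pi fun i => ContinuousLinearMap.pi fun j =>
        (μ₁ - μ₀)⁻¹ • (![![μ₁ • Bsy y - μ₀ • By y, (μ₀ * μ₁) • (By y - Bsy y)],
          ![Bsy y - By y, μ₁ • By y - μ₀ • Bsy y]] i j)) u := by
    intro y
    have hfun : (fun x => ω x y) = fun x => (μ₁ - μ₀)⁻¹ •
        Matrix.of ![![μ₁ • βs x y - μ₀ • β x y, (μ₀ * μ₁) • (β x y - βs x y)],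
          ![βs x y - β x y, μ₁ • β x y - μ₀ • βs x y]] := by
      funext x; exact hω x y
    rw [hfun]
    apply hasFDerivAt_pi''
    intro i
    apply hasFDerivAt_pi''
    intro j
    simp only [ContinuousLinearMap.proj_pi]
    fin_cases i <;> fin_cases j <;>
      simp only [Matrix.smul_apply, Matrix.of_apply, Matrix.cons_val_zero, Matrix.cons_val_one,
        Matrix.head_cons, Fin.isValue] <;>
    · first
      | exact ((((haps y).const_smul μ₁).sub ((hap y).const_smul μ₀)).const_smul (μ₁ - μ₀)⁻¹)
      | exact ((((hap y).sub (haps y)).const_smul (μ₀ * μ₁)).const_smul (μ₁ - μ₀)⁻¹)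
      | exact (((haps y).sub (hap y)).const_smul (μ₁ - μ₀)⁻¹)
      | exact ((((hap y).const_smul μ₁).sub ((haps y).const_smul μ₀)).const_smul (μ₁ - μ₀)⁻¹)
  -- applied values, computed entrywise by defeq
  have happly : ∀ y z : E, fderiv ℝ (fun x => ω x y) u z = Matrix.of
      ![![(μ₁ - μ₀)⁻¹ • (μ₁ • fderiv ℝ βs u z y - μ₀ • fderiv ℝ β u z y),
          (μ₁ - μ₀)⁻¹ • ((μ₀ * μ₁) • (fderiv ℝ β u z y - fderiv ℝ βs u z y))],
        ![(μ₁ - μ₀)⁻¹ • (fderiv ℝ βs u z y - fderiv ℝ β u z y),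
          (μ₁ - μ₀)⁻¹ • (μ₁ • fderiv ℝ β u z y - μ₀ • fderiv ℝ βs u z y)]] := by
    intro y z
    rw [show fderiv ℝ (fun x => ω x y) u = _ from @HasFDerivAt.fderiv _ _ _ _ _ _ _ _ _ _ _ _ _ _ _ _ (inferInstanceAs (ContinuousSMul ℝ (Fin 2 → Fin 2 → A))) (inferInstanceAs (T2Space (Fin 2 → Fin 2 → A))) (key y)]
    funext i j
    fin_cases i <;> fin_cases j <;> rfl
  have hωval : ∀ x y : E, ω x y = Matrix.of
      ![![(μ₁ - μ₀)⁻¹ • (μ₁ • βs x y - μ₀ • β x y), (μ₁ - μ₀)⁻¹ • ((μ₀ * μ₁) • (β x y - βs x y))],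
        ![(μ₁ - μ₀)⁻¹ • (βs x y - β x y), (μ₁ - μ₀)⁻¹ • (μ₁ • β x y - μ₀ • βs x y)]] := by
    intro x y
    rw [hω x y]
    funext i j
    fin_cases i <;> fin_cases j <;> rfl
  rw [happly w v, happly v w, hωval u v, hωval u w]
  have hP : fderiv ℝ β u v w = fderiv ℝ β u w v + (β u w * β u v - β u v * β u w) := by
    have h := hβflat u hu v w
    have h2 : fderiv ℝ β u v w - (fderiv ℝ β u w v + (β u w * β u v - β u v * β u w))
        = fderiv ℝ β u v w - fderiv ℝ β u w v + β u v * β u w - β u w * β u v := by abel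
    rw [← sub_eq_zero, h2, h]
  have hQ : fderiv ℝ βs u v w = fderiv ℝ βs u w v + (βs u w * βs u v - βs u v * βs u w) := by
    have h := hβsflat u hu v w
    have h2 : fderiv ℝ βs u v w - (fderiv ℝ βs u w v + (βs u w * βs u v - βs u v * βs u w))
        = fderiv ℝ βs u v w - fderiv ℝ βs u w v + βs u v * βs u w - βs u w * βs u v := by abel
    rw [← sub_eq_zero, h2, h]
  funext i j
  fin_cases i <;> fin_cases j <;>
  · simp only [Matrix.sub_apply, Matrix.add_apply, Matrix.mul_apply, Fin.sum_univ_two,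
      Matrix.of_apply, Matrix.cons_val_zero, Matrix.cons_val_one, Matrix.head_cons,
      Matrix.zero_apply, Fin.isValue, Matrix.cons_val', Matrix.empty_val',
      Matrix.cons_val_fin_one, Matrix.head_fin_const, Fin.mk_zero, Fin.mk_one]
    rw [hP, hQ]
    simp only [smul_sub, sub_smul, smul_smul, smul_add, add_smul, mul_sub, sub_mul, mul_add,
      add_mul, smul_mul_assoc, mul_smul_comm]
    match_scalars
    all_goals field_simp
    all_goals ring
end

section
/- Let S⁺, S⁻ ⊆ ℂ⁴ be 2-dimensional complex subspaces with ℂ⁴ = S⁺ ⊕ S⁻, and let L⁺ ⊆ S⁺ be a 1-dimensional subspace. Let q be a ℂ-linear endomorphism of ℂ⁴ with q(S⁺) ⊆ S⁺ and q(S⁻) ⊆ S⁻, and suppose that in the exterior power ⋀²ℂ⁴: (i) (qx)∧y + x∧(qy) = 0 for all x, y ∈ S⁺; (ii) (qx)∧y + x∧(qy) = 0 for all x, y ∈ S⁻; (iii) (qσ)∧s + σ∧(qs) = 0 for all σ ∈ L⁺ and s ∈ S⁻. Then q vanishes on S⁻, q vanishes on L⁺, and q(S⁺) ⊆ L⁺.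 -/
noncomputable section

open ExteriorAlgebra

def wedgeCoeff (b : Module.Basis (Fin 4) ℂ C4) (i j : Fin 4) : ExteriorAlgebra ℂ C4 →ₗ[ℂ] ℂ :=
  liftAlternating fun n => match n with
    | 2 => ((Pi.basisFun ℂ (Fin 2)).det).compLinearMap
        (LinearMap.pi ![b.coord i, b.coord j])
    | _ => 0

theorem wedgeCoeff_apply (b : Module.Basis (Fin 4) ℂ C4) (i j : Fin 4) (x y : C4) :
    wedgeCoeff b i j (ι ℂ x * ι ℂ y)
      = b.repr x i * b.repr y j - b.repr x j * b.repr y i := by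
  rw [wedgeCoeff, liftAlternating_ι_mul, liftAlternating_ι]
  simp [AlternatingMap.curryLeft_apply_apply, Module.Basis.det_apply, Matrix.det_fin_two,
    Matrix.cons_val_zero, Matrix.cons_val_one, Module.Basis.coord_apply]
  exact (Matrix.det_fin_two _).trans (by simp [Module.Basis.coord_apply])


/-- Let `ℂ⁴ = S⁺ ⊕ S⁻` with `dim S± = 2`, `L⁺ ⊆ S⁺` a line, and
`q` an endomorphism preserving `S⁺` and `S⁻` whose induced derivation of `⋀²ℂ⁴`
annihilates `⋀²S⁺`, `⋀²S⁻` and `L⁺ ∧ S⁻`.  Then `q` vanishes on `S⁻` and on `L⁺`,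
and `q(S⁺) ⊆ L⁺`. -/
theorem statement15
    (Sp Sm Lp : Submodule ℂ C4)
    (hSp : Module.finrank ℂ Sp = 2) (hSm : Module.finrank ℂ Sm = 2)
    (hcompl : IsCompl Sp Sm)
    (hLp : Lp ≤ Sp) (hLpdim : Module.finrank ℂ Lp = 1)
    (q : C4 →ₗ[ℂ] C4)
    (hqp : ∀ x ∈ Sp, q x ∈ Sp) (hqm : ∀ x ∈ Sm, q x ∈ Sm)
    (h1 : ∀ x ∈ Sp, ∀ y ∈ Sp,
      ι ℂ (q x) * ι ℂ y + ι ℂ x * ι ℂ (q y) = (0 : ExteriorAlgebra ℂ C4))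
    (h2 : ∀ x ∈ Sm, ∀ y ∈ Sm,
      ι ℂ (q x) * ι ℂ y + ι ℂ x * ι ℂ (q y) = (0 : ExteriorAlgebra ℂ C4))
    (h3 : ∀ σ ∈ Lp, ∀ s ∈ Sm,
      ι ℂ (q σ) * ι ℂ s + ι ℂ σ * ι ℂ (q s) = (0 : ExteriorAlgebra ℂ C4)) :
    (∀ x ∈ Sm, q x = 0) ∧ (∀ σ ∈ Lp, q σ = 0) ∧ (∀ x ∈ Sp, q x ∈ Lp) := by
  -- σ spanning Lp
  obtain ⟨⟨σ, hσLp⟩, hσ0, hσgen⟩ := finrank_eq_one_iff' (K := ℂ) (V := Lp) |>.mp hLpdim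
  have hσ0' : σ ≠ 0 := fun h => hσ0 (Subtype.ext h)
  have hLpspan : Lp = Submodule.span ℂ {σ} := by
    apply le_antisymm
    · intro w hw
      obtain ⟨c, hc⟩ := hσgen ⟨w, hw⟩
      have : c • σ = w := congrArg Subtype.val hc
      rw [← this]
      exact Submodule.smul_mem _ _ (Submodule.mem_span_singleton_self σ)
    · rw [Submodule.span_le, Set.singleton_subset_iff]; exact hσLp
  have hσSp : σ ∈ Sp := hLp hσLp
  -- τ
  have : ∃ τ ∈ Sp, τ ∉ Submodule.span ℂ {σ} := by
    by_contra h
    push_neg at h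
    have hle : Sp ≤ Submodule.span ℂ {σ} := h
    have := Submodule.finrank_mono (hLpspan ▸ hle)
    omega
  obtain ⟨τ, hτSp, hτ⟩ := this
  have hστ : LinearIndependent ℂ ![σ, τ] := by
    rw [LinearIndependent.pair_iff]
    intro a c h
    rcases eq_or_ne c 0 with rfl | hc
    · simp only [zero_smul, add_zero, smul_eq_zero] at h
      exact ⟨h.resolve_right hσ0', rfl⟩
    · exfalso
      apply hτ
      rw [Submodule.mem_span_singleton]
      refine ⟨c⁻¹ * (-a), ?_⟩
      have h2 : c • τ = (-a) • σ := by linear_combination (norm := module) h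
      rw [mul_smul, ← h2, smul_smul, inv_mul_cancel₀ hc, one_smul]
  -- s t
  set bm := Module.finBasisOfFinrankEq ℂ Sm hSm with hbm
  set s : C4 := ((bm 0 : Sm) : C4) with hs
  set t : C4 := ((bm 1 : Sm) : C4) with ht
  have hsSm : s ∈ Sm := (bm 0).2
  have htSm : t ∈ Sm := (bm 1).2
  have hst : LinearIndependent ℂ ![s, t] := by
    have := (bm.linearIndependent.map' Sm.subtype (Submodule.ker_subtype Sm))
    have he : (Sm.subtype ∘ bm) = ![s, t] := by
      funext i; fin_cases i <;> rfl
    rwa [he] at this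
  -- spans
  have hr1 : Set.range ![σ, τ] = {σ, τ} := by
    simp [Matrix.range_cons, Matrix.range_empty]
    exact Set.pair_comm τ σ
  have hr2 : Set.range ![s, t] = {s, t} := by
    simp [Matrix.range_cons, Matrix.range_empty]
    exact Set.pair_comm t s
  have hSpspan : Submodule.span ℂ {σ, τ} = Sp := by
    apply Submodule.eq_of_le_of_finrank_eq
    · rw [Submodule.span_le]; rintro x (rfl | rfl); exacts [hσSp, by simpa using hτSp]
    · rw [hSp, ← hr1, finrank_span_eq_card hστ]; simp
  have hSmspan : Submodule.span ℂ {s, t} = Sm := by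
    apply Submodule.eq_of_le_of_finrank_eq
    · rw [Submodule.span_le]; rintro x (rfl | rfl); exacts [hsSm, by simpa using htSm]
    · rw [hSm, ← hr2, finrank_span_eq_card hst]; simp
  -- full family
  have hsum : LinearIndependent ℂ (Sum.elim ![σ, τ] ![s, t]) := by
    apply hστ.sum_type hst
    rw [hr1, hr2, hSpspan, hSmspan]
    exact hcompl.disjoint
  have hv : LinearIndependent ℂ ![σ, τ, s, t] := by
    have := hsum.comp finSumFinEquiv.symm finSumFinEquiv.symm.injective
    have he : (Sum.elim ![σ, τ] ![s, t]) ∘ finSumFinEquiv.symm = ![σ, τ, s, t] := by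
      funext i; fin_cases i <;> rfl
    rwa [he] at this
  have hdim : Fintype.card (Fin 4) = Module.finrank ℂ C4 := by simp
  set b : Module.Basis (Fin 4) ℂ C4 := basisOfLinearIndependentOfCardEqFinrank hv hdim with hbdef
  have hb : ⇑b = ![σ, τ, s, t] := coe_basisOfLinearIndependentOfCardEqFinrank hv hdim
  have hb0 : b 0 = σ := by rw [hb]; rfl
  have hb1 : b 1 = τ := by rw [hb]; rfl
  have hb2 : b 2 = s := by rw [hb]; rfl
  have hb3 : b 3 = t := by rw [hb]; rfl
  have hrσ : b.repr σ = Finsupp.single 0 1 := by rw [← hb0]; exact b.repr_self 0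
  have hrτ : b.repr τ = Finsupp.single 1 1 := by rw [← hb1]; exact b.repr_self 1
  have hrs : b.repr s = Finsupp.single 2 1 := by rw [← hb2]; exact b.repr_self 2
  have hrt : b.repr t = Finsupp.single 3 1 := by rw [← hb3]; exact b.repr_self 3
  obtain ⟨aσ1, aσ2, hqσ⟩ := Submodule.mem_span_pair.mp
    (show q σ ∈ Submodule.span ℂ {σ, τ} by rw [hSpspan]; exact hqp σ hσSp)
  obtain ⟨aτ1, aτ2, hqτ⟩ := Submodule.mem_span_pair.mp
    (show q τ ∈ Submodule.span ℂ {σ, τ} by rw [hSpspan]; exact hqp τ hτSp)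
  obtain ⟨as1, as2, hqs⟩ := Submodule.mem_span_pair.mp
    (show q s ∈ Submodule.span ℂ {s, t} by rw [hSmspan]; exact hqm s hsSm)
  obtain ⟨at1, at2, hqt⟩ := Submodule.mem_span_pair.mp
    (show q t ∈ Submodule.span ℂ {s, t} by rw [hSmspan]; exact hqm t htSm)
  have key : ∀ (i j : Fin 4) (x y : C4),
      ι ℂ (q x) * ι ℂ y + ι ℂ x * ι ℂ (q y) = (0 : ExteriorAlgebra ℂ C4) →
      (b.repr (q x) i * b.repr y j - b.repr (q x) j * b.repr y i)
      + (b.repr x i * b.repr (q y) j - b.repr x j * b.repr (q y) i) = 0 := by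
    intro i j x y hxy
    have h := congrArg (wedgeCoeff b i j) hxy
    rwa [map_add, map_zero, wedgeCoeff_apply, wedgeCoeff_apply] at h
  have hσLp' : σ ∈ Lp := hσLp
  have E1 := key 0 1 σ τ (h1 σ hσSp τ hτSp)
  have E2 := key 2 3 s t (h2 s hsSm t htSm)
  have E3 := key 0 2 σ s (h3 σ hσLp' s hsSm)
  have E4 := key 1 2 σ s (h3 σ hσLp' s hsSm)
  have E5 := key 0 3 σ s (h3 σ hσLp' s hsSm)
  have E6 := key 0 3 σ t (h3 σ hσLp' t htSm)
  have E7 := key 0 2 σ t (h3 σ hσLp' t htSm)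
  rw [← hqσ, ← hqτ] at E1
  rw [← hqs, ← hqt] at E2
  rw [← hqσ, ← hqs] at E3 E4 E5
  rw [← hqσ, ← hqt] at E6 E7
  simp only [map_add, map_smul, hrσ, hrτ, hrs, hrt, Finsupp.coe_add, Finsupp.coe_smul,
    Pi.add_apply, Pi.smul_apply, Finsupp.single_apply, smul_eq_mul] at E1 E2 E3 E4 E5 E6 E7
  norm_num [Fin.ext_iff, show ((3 : Fin 4) : ℕ) = 3 from rfl] at E1 E2 E3 E4 E5 E6 E7
  have haσ1 : aσ1 = 0 := by linear_combination E3/2 + E6/2 - E2/2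
  have has1 : as1 = 0 := by linear_combination E3 - haσ1
  have hat2 : at2 = 0 := by linear_combination E6 - haσ1
  have haτ2 : aτ2 = 0 := by linear_combination E1 - haσ1
  have hqσ0 : q σ = 0 := by rw [← hqσ, haσ1, E4]; simp
  have hqs0 : q s = 0 := by rw [← hqs, has1, E5]; simp
  have hqt0 : q t = 0 := by rw [← hqt, E7, hat2]; simp
  refine ⟨?_, ?_, ?_⟩
  · intro x hx
    obtain ⟨c, d, hcd⟩ := Submodule.mem_span_pair.mp
      (show x ∈ Submodule.span ℂ {s, t} by rw [hSmspan]; exact hx)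
    rw [← hcd, map_add, map_smul, map_smul, hqs0, hqt0, smul_zero, smul_zero, add_zero]
  · intro σ' hσ'
    rw [hLpspan, Submodule.mem_span_singleton] at hσ'
    obtain ⟨c, rfl⟩ := hσ'
    rw [map_smul, hqσ0, smul_zero]
  · intro x hx
    obtain ⟨c, d, hcd⟩ := Submodule.mem_span_pair.mp
      (show x ∈ Submodule.span ℂ {σ, τ} by rw [hSpspan]; exact hx)
    rw [← hcd, map_add, map_smul, map_smul, hqσ0, smul_zero, zero_add, ← hqτ, haτ2]
    simp only [zero_smul, add_zero]
    exact Submodule.smul_mem _ _ (Submodule.smul_mem _ _ hσLp)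


end
end
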